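/- Let Q = [[a, b], [c, d]] be an invertible 2 × 2 complex matrix with d ≠ 0, c = −a·conj(b)/conj(d), and |a| = |d|. Define A_{ij} = |Q_{ij}| and B_{ij} = |(Q⁻¹)_{ij}|. Then for every permutation π of {1, 2} and all indices k, l ∈ {1, 2}: ∑_{j=1}^{2} A_{k,π(j)} · B_{j,l} ≤ 1. -/

import Mathlib

open Matrix Finset

/-- Property `(S₂)` (Lemma 5 of the paper): if `Q = !![a, b; c, d]` is an
invertible `2 × 2` complex matrix with `c = -a * conj b / conj d` and
`|a| = |d|`, then with `A i j = |Q i j|` and `B i j = |Q⁻¹ i j|`, for every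
permutation `π` of `{1, 2}` and all `k, l` we have
`∑ j, A k (π j) * B j l ≤ 1`. -/
theorem property_S2_of_qubit_solution
    (a b c d : ℂ) (hd : d ≠ 0)
    (hc : c = -a * (starRingEnd ℂ) b / (starRingEnd ℂ) d)
    (habs : ‖a‖ = ‖d‖)
    (Q : Matrix (Fin 2) (Fin 2) ℂ) (hQ : Q = !![a, b; c, d])
    (hinv : IsUnit Q.det)
    (π : Equiv.Perm (Fin 2)) (k l : Fin 2) :
    ∑ j : Fin 2, ‖Q k (π j)‖ * ‖Q⁻¹ j l‖ ≤ 1 := by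
  set p := ‖d‖ with hp
  set q := ‖b‖ with hq
  have hp0 : 0 < p := by simpa [hp] using (norm_pos_iff.mpr hd)
  have hd' : (starRingEnd ℂ) d ≠ 0 := by simpa using hd
  have h1 : d * (starRingEnd ℂ) d = ((p^2 : ℝ) : ℂ) := by
    rw [Complex.mul_conj]; norm_cast; rw [hp, Complex.sq_norm]
  have h2 : b * (starRingEnd ℂ) b = ((q^2 : ℝ) : ℂ) := by
    rw [Complex.mul_conj]; norm_cast; rw [hq, Complex.sq_norm]
  have hdet : Q.det = a * ((p^2 + q^2 : ℝ) : ℂ) / (starRingEnd ℂ) d := by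
    rw [hQ, Matrix.det_fin_two_of, hc]
    field_simp
    push_cast at h1 h2 ⊢
    linear_combination a * h1 + a * h2
  have habsdet : ‖Q.det‖ = p^2 + q^2 := by
    rw [hdet, norm_div, norm_mul, habs, Complex.norm_conj, ← hp]
    rw [show ‖((p^2 + q^2 : ℝ) : ℂ)‖ = p^2 + q^2 from by
      rw [Complex.norm_real, Real.norm_eq_abs]; exact abs_of_nonneg (by positivity)]
    field_simp
  have hc_abs : ‖c‖ = q := by
    rw [hc, norm_div, show -a * (starRingEnd ℂ) b = -(a * (starRingEnd ℂ) b) by ring,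
      norm_neg, norm_mul, Complex.norm_conj, Complex.norm_conj, habs, ← hp, ← hq]
    field_simp
  have hQi : Q⁻¹ = (Q.det)⁻¹ • !![d, -b; -c, a] := by
    rw [Matrix.inv_def, Ring.inverse_eq_inv', hQ, Matrix.adjugate_fin_two_of]
  have habsinv : ‖(Q.det)⁻¹‖ = (p^2 + q^2)⁻¹ := by
    rw [norm_inv, habsdet]
  have hD : 0 < p^2 + q^2 := by positivity
  have h0 : π 0 = 0 ∨ π 0 = 1 := by generalize π 0 = i; fin_cases i <;> simp
  have h1' : π 1 = 0 ∨ π 1 = 1 := by generalize π 1 = i; fin_cases i <;> simp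
  have hne : π 0 ≠ π 1 := by
    intro h; exact absurd (π.injective h) (by decide)
  have hπ01 : (π 0 = 0 ∧ π 1 = 1) ∨ (π 0 = 1 ∧ π 1 = 0) := by
    rcases h0 with h0 | h0 <;> rcases h1' with h1' | h1' <;>
      first
        | (exact absurd (h0.trans h1'.symm) hne)
        | (left; exact ⟨h0, h1'⟩)
        | (right; exact ⟨h0, h1'⟩)
  have hB : ∀ j l : Fin 2, ‖Q⁻¹ j l‖
      = (p^2+q^2)⁻¹ * ‖!![d, -b; -c, a] j l‖ := by
    intro j l; rw [hQi, Matrix.smul_apply, smul_eq_mul, norm_mul, habsinv]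
  have hDi : (p^2+q^2)⁻¹ * (p^2+q^2) = 1 := inv_mul_cancel₀ hD.ne'
  have hinvpos : (0:ℝ) ≤ (p^2+q^2)⁻¹ * (p - q)^2 :=
    mul_nonneg (inv_nonneg.mpr hD.le) (sq_nonneg _)
  rw [Fin.sum_univ_two, hB 0 l, hB 1 l]
  rcases hπ01 with ⟨e0, e1⟩ | ⟨e0, e1⟩ <;> rw [e0, e1] <;>
    fin_cases k <;> fin_cases l <;>
    simp [hQ, hB, hc_abs, habs, norm_neg] <;>
    nlinarith [hDi, hinvpos, hp0, norm_nonneg b]
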